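/- For a finite nonempty set V and a set L of sequences over V, the following are equivalent: (i) (V, L) is a traversal repertoire, i.e., L satisfies axioms (T1)–(T4); (ii) L is the traversal repertoire L(G) of some signed hyperdigraph G = (V, E, σ) with node set V. -/

import Mathlib

/-- A signed directed hypergraph: a (finite, nonempty) node type `V`, a finite
edge type `E`, each edge having a source set, a target node, and a sign
(`true` = positive, `false` = negative). -/
structure SignedHyperdigraph (V : Type*) where
  E : Type*
  finE : Finite E
  src : E → Set V
  tgt : E → V
  sign : E → Bool

namespace SignedHyperdigraph

/-- The traversal repertoire of a signed hyperdigraph: the sequences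
`⟨x₁, …, x_k⟩` such that for each position `i`, writing `A` for the set of
earlier entries, (a) `xᵢ ∉ A`; (b) some positive edge has sources inside `A`
and target `xᵢ`; and (c) no negative edge has sources inside `A` and
target `xᵢ`. -/
def repertoire {V : Type*} (G : SignedHyperdigraph V) : Set (List V) :=
  {τ | ∀ i : Fin τ.length,
    (τ.get i ∉ τ.take i.val) ∧
    (∃ e : G.E, G.sign e = true ∧ G.src e ⊆ {v | v ∈ τ.take i.val} ∧
      G.tgt e = τ.get i) ∧
    ¬ ∃ e : G.E, G.sign e = false ∧ G.src e ⊆ {v | v ∈ τ.take i.val} ∧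
      G.tgt e = τ.get i}

end SignedHyperdigraph

/-- The traversal axioms (T1)–(T4): a traversal repertoire is a set of
sequences that contains the empty sequence (T1), is simple (T2), hereditary
(T3), and has the interval property (T4). -/
def IsTraversalRepertoire {V : Type*} (L : Set (List V)) : Prop :=
  ([] ∈ L) ∧
  (∀ (τ : List V) (x : V), τ ++ [x] ∈ L → x ∉ τ) ∧
  (∀ (τ : List V) (x : V), τ ++ [x] ∈ L → τ ∈ L) ∧
  (∀ (α τ ω : List V) (x : V), (∀ v ∈ α, v ∈ τ) → (∀ v ∈ τ, v ∈ ω) →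
    τ ∈ L → α ++ [x] ∈ L → ω ++ [x] ∈ L → τ ++ [x] ∈ L)

namespace SignedHyperdigraph

variable {V : Type*} (G : SignedHyperdigraph V)

/-- The condition under which `x` can be appended after a prefix with entry set `A`. -/
def Cond (A : Set V) (x : V) : Prop :=
  x ∉ A ∧ (∃ e : G.E, G.sign e = true ∧ G.src e ⊆ A ∧ G.tgt e = x) ∧
    ¬ ∃ e : G.E, G.sign e = false ∧ G.src e ⊆ A ∧ G.tgt e = x

lemma nil_mem_repertoire : ([] : List V) ∈ G.repertoire := by
  intro i; exact absurd i.isLt (by simp)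

lemma mem_repertoire_append (τ : List V) (x : V) :
    τ ++ [x] ∈ G.repertoire ↔ τ ∈ G.repertoire ∧ G.Cond {v | v ∈ τ} x := by
  have hlen : (τ ++ [x]).length = τ.length + 1 := by simp
  have htake : ∀ i : ℕ, i ≤ τ.length → (τ ++ [x]).take i = τ.take i := by
    intro i hi
    rw [List.take_append, Nat.sub_eq_zero_of_le hi]
    simp
  constructor
  · intro h
    constructor
    · intro i
      have hi' : i.val < (τ ++ [x]).length := by omega
      have := h ⟨i.val, hi'⟩
      simpa [List.get_eq_getElem, htake i.val (le_of_lt i.isLt),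
        List.getElem_append_left i.isLt] using this
    · have hn : τ.length < (τ ++ [x]).length := by omega
      have H := h ⟨τ.length, hn⟩
      simp only [Cond, Set.mem_setOf_eq, not_exists]
      simpa [List.get_eq_getElem, List.getElem_concat_length rfl,
        List.take_left, not_exists] using H
  · rintro ⟨h1, h2⟩ i
    have hi2 : (i : ℕ) < τ.length + 1 := by simpa using i.isLt
    rcases lt_or_eq_of_le (Nat.lt_succ_iff.mp hi2) with hi | hi
    · have := h1 ⟨i.val, hi⟩
      simpa [List.get_eq_getElem, htake i.val (le_of_lt hi),
        List.getElem_append_left hi] using this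
    · obtain ⟨hx, hpos, hneg⟩ := h2
      refine ⟨?_, ?_, ?_⟩ <;>
        simp only [List.get_eq_getElem, hi, List.getElem_concat_length rfl,
          List.take_left]
      · simpa using hx
      · exact hpos
      · exact hneg

lemma repertoire_isTraversal : IsTraversalRepertoire G.repertoire := by
  refine ⟨G.nil_mem_repertoire, ?_, ?_, ?_⟩
  · intro τ x h
    exact ((G.mem_repertoire_append τ x).mp h).2.1
  · intro τ x h
    exact ((G.mem_repertoire_append τ x).mp h).1
  · intro α τ ω x hat hto hτ hα hω
    rw [G.mem_repertoire_append]
    obtain ⟨-, hxα⟩ := (G.mem_repertoire_append α x).mp hα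
    obtain ⟨-, hxω⟩ := (G.mem_repertoire_append ω x).mp hω
    refine ⟨hτ, fun hx => hxω.1 (hto x hx), ?_, ?_⟩
    · obtain ⟨e, he1, he2, he3⟩ := hxα.2.1
      exact ⟨e, he1, fun v hv => hat v (he2 hv), he3⟩
    · rintro ⟨e, he1, he2, he3⟩
      exact hxω.2.2 ⟨e, he1, fun v hv => hto v (he2 hv), he3⟩

end SignedHyperdigraph

universe u

section Construction

variable {V : Type} [Finite V] (L : Set (List V))

/-- Positive edge data: `(S, x)` with `S` the entry set of some `α` with `α ++ [x] ∈ L`. -/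
def PosE (S : Set V) (x : V) : Prop :=
  ∃ α : List V, α ++ [x] ∈ L ∧ {v | v ∈ α} = S

/-- Negative edge data. -/
def NegE (S : Set V) (x : V) : Prop :=
  ∃ τ : List V, τ ∈ L ∧ {v | v ∈ τ} = S ∧
    (∃ α : List V, α ++ [x] ∈ L ∧ {v | v ∈ α} ⊆ S) ∧ τ ++ [x] ∉ L

/-- The signed hyperdigraph built from a set of sequences. -/
def mkG : SignedHyperdigraph.{0, u} V where
  E := ULift.{u} {p : Set V × V × Bool //
    (p.2.2 = true → PosE L p.1 p.2.1) ∧ (p.2.2 = false → NegE L p.1 p.2.1)}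
  finE := inferInstance
  src p := p.down.1.1
  tgt p := p.down.1.2.1
  sign p := p.down.1.2.2

lemma mkG_cond (h : IsTraversalRepertoire L) {τ : List V} (hτ : τ ∈ L) (x : V) :
    (mkG L).Cond {v | v ∈ τ} x ↔ τ ++ [x] ∈ L := by
  obtain ⟨h1, h2, h3, h4⟩ := h
  constructor
  · rintro ⟨hx, ⟨⟨⟨⟨S, y, b⟩, hb1, hb2⟩⟩, hsign, hsub, htgt⟩, hneg⟩
    simp only [mkG] at hsign hsub htgt
    subst htgt
    dsimp only at hb1 hb2
    obtain ⟨α, hα, hαS⟩ := hb1 hsign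
    by_contra hτx
    refine hneg ⟨⟨⟨⟨{v | v ∈ τ}, y, false⟩, ?_, ?_⟩⟩, rfl, le_refl _, rfl⟩
    · simp
    · intro _
      exact ⟨τ, hτ, rfl, ⟨α, hα, hαS ▸ hsub⟩, hτx⟩
  · intro hτx
    refine ⟨h2 τ x hτx, ?_, ?_⟩
    · exact ⟨⟨⟨⟨{v | v ∈ τ}, x, true⟩, fun _ => ⟨τ, hτx, rfl⟩, by simp⟩⟩,
        rfl, le_refl _, rfl⟩
    · rintro ⟨⟨⟨⟨S, y, b⟩, hb1, hb2⟩⟩, hsign, hsub, htgt⟩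
      simp only [mkG] at hsign hsub htgt
      subst htgt
      dsimp only at hb1 hb2
      obtain ⟨ρ, hρ, hρS, ⟨α, hα, hαS⟩, hρx⟩ := hb2 hsign
      refine hρx (h4 α ρ τ y ?_ ?_ hρ hα hτx)
      · intro v hv
        have : v ∈ S := hαS hv
        rw [← hρS] at this
        exact this
      · intro v hv
        have : v ∈ S := by rw [← hρS]; exact hv
        exact hsub this

end Construction

/-- Theorem on traversal repertoires and signed hyperdigraphs:
for a finite nonempty set `V`, a set `L` of sequences over `V` satisfies the
traversal axioms (T1)–(T4) iff it is the traversal repertoire of some signed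
hyperdigraph on `V`. -/
theorem isTraversalRepertoire_iff_exists_signedHyperdigraph
    {V : Type} [Finite V] [Nonempty V] (L : Set (List V)) :
    IsTraversalRepertoire L ↔
      ∃ G : SignedHyperdigraph V, L = G.repertoire := by

  constructor
  · intro h
    refine ⟨mkG L, Set.eq_of_subset_of_subset ?_ ?_⟩
    · intro τ hτ
      induction τ using List.reverseRecOn with
      | nil => exact (mkG L).nil_mem_repertoire
      | append_singleton ρ x ih =>
        have hρ : ρ ∈ L := h.2.2.1 ρ x hτ
        exact ((mkG L).mem_repertoire_append ρ x).mpr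
          ⟨ih hρ, (mkG_cond L h hρ x).mpr hτ⟩
    · intro τ hτ
      induction τ using List.reverseRecOn with
      | nil => exact h.1
      | append_singleton ρ x ih =>
        obtain ⟨hρrep, hc⟩ := ((mkG L).mem_repertoire_append ρ x).mp hτ
        have hρ : ρ ∈ L := ih hρrep
        exact (mkG_cond L h hρ x).mp hc
  · rintro ⟨G, rfl⟩
    exact G.repertoire_isTraversal
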